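/- Let p be a prime and k, n, m positive integers with p | k and m = 2k − k/p. If f ∈ F_p[x_1, ..., x_n] is homogeneous of degree kp − 1 and all Hasse derivatives of f of weight < m vanish at every point of a line L in direction b ≠ 0, then all Hasse derivatives of f of weight < k vanish at b. -/

import Mathlib

open MvPolynomial

/-- The shift of `f` by `a`: the polynomial `z ↦ f(z + a)`. Its coefficients are
exactly the Hasse derivatives of `f` evaluated at `a`. -/
noncomputable def polyShift {F : Type*} [CommRing F] {n : ℕ}
    (f : MvPolynomial (Fin n) F) (a : Fin n → F) : MvPolynomial (Fin n) F :=
  MvPolynomial.bind₁ (fun i => MvPolynomial.X i + MvPolynomial.C (a i)) f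

/-- All Hasse derivatives of `f` of weight `< m` vanish at `a`. -/
def HasseVanish {F : Type*} [CommRing F] {n : ℕ}
    (f : MvPolynomial (Fin n) F) (a : Fin n → F) (m : ℕ) : Prop :=
  ∀ d : Fin n →₀ ℕ, (d.sum fun _ e => e) < m →
    MvPolynomial.coeff d (polyShift f a) = 0

section Helpers

variable {n : ℕ} {R : Type*} [CommRing R]


theorem coeff_binom_pow (j : Fin n) (c : R) (e : ℕ) (d : Fin n →₀ ℕ) :
    coeff d ((X j + C c) ^ e : MvPolynomial (Fin n) R) =
      if d = Finsupp.single j (d j) then ((e.choose (d j) : R) * c ^ (e - d j)) else 0 := by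
  rw [add_pow]
  have hrw : ∀ k : ℕ, (X j : MvPolynomial (Fin n) R) ^ k * C c ^ (e - k) * (e.choose k : MvPolynomial (Fin n) R)
      = monomial (Finsupp.single j k) (c ^ (e - k) * (e.choose k : R)) := by
    intro k
    rw [X_pow_eq_monomial, ← C_pow, ← map_natCast (C : R →+* MvPolynomial (Fin n) R),
      C_apply, C_apply, monomial_mul, monomial_mul]
    simp
  simp_rw [coeff_sum, hrw, coeff_monomial]
  by_cases hd : d = Finsupp.single j (d j)
  · have key : ∀ k : ℕ, (Finsupp.single j k = d) ↔ (k = d j) := by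
      intro k
      constructor
      · rintro rfl; simp
      · rintro rfl; exact hd.symm
    simp_rw [key]
    rw [Finset.sum_ite_eq' (Finset.range (e + 1)) (d j) (fun k => c ^ (e - k) * (e.choose k : R))]
    rw [if_pos hd]
    by_cases hde : d j ≤ e
    · rw [if_pos (Finset.mem_range.mpr (Nat.lt_succ_of_le hde)), mul_comm]
    · rw [if_neg (by simp [Finset.mem_range]; omega), Nat.choose_eq_zero_of_lt (by omega)]
      simp
  · rw [if_neg hd]
    apply Finset.sum_eq_zero
    intro k _
    rw [if_neg]
    intro hkd
    apply hd
    rw [← hkd]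
    simp

theorem coeff_prod_binom (γ : Fin n → R) (u : Fin n → ℕ) (s : Finset (Fin n)) :
    ∀ (d : Fin n →₀ ℕ),
      coeff d (∏ i ∈ s, ((X i + C (γ i)) ^ u i : MvPolynomial (Fin n) R)) =
        if ∀ i, d i ≠ 0 → i ∈ s then ∏ i ∈ s, (((u i).choose (d i) : R) * γ i ^ (u i - d i))
        else 0 := by
  induction s using Finset.induction_on with
  | empty =>
    intro d
    rw [Finset.prod_empty]
    by_cases hd : d = 0
    · subst hd
      simp
    · rw [if_neg, coeff_one, if_neg (by simpa using (Ne.symm hd))]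
      push_neg
      obtain ⟨i, hi⟩ : ∃ i, d i ≠ 0 := by
        by_contra h
        push_neg at h
        exact hd (Finsupp.ext h)
      exact ⟨i, hi, by simp⟩
  | @insert j s hj ih =>
    intro d
    rw [Finset.prod_insert hj, coeff_mul]
    have hmain : (Finsupp.single j (d j), d.erase j) ∈ Finset.HasAntidiagonal.antidiagonal d := by
      rw [Finset.HasAntidiagonal.mem_antidiagonal]
      exact Finsupp.single_add_erase j d
    rw [Finset.sum_eq_single_of_mem _ hmain ?other]
    case other =>
      rintro ⟨x1, x2⟩ hmem hne
      rw [Finset.HasAntidiagonal.mem_antidiagonal] at hmem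
      rw [coeff_binom_pow, ih]
      by_cases h1 : x1 = Finsupp.single j (x1 j)
      · by_cases h2 : ∀ i, x2 i ≠ 0 → i ∈ s
        · exfalso
          apply hne
          have hx2j : x2 j = 0 := by
            by_contra h
            exact hj (h2 j h)
          have hx1j : x1 j = d j := by
            have := DFunLike.congr_fun hmem j
            simp only [Finsupp.add_apply] at this
            omega
          have hx1 : x1 = Finsupp.single j (d j) := by rw [h1, hx1j]
          have hx2 : x2 = d.erase j := by
            ext i
            rcases eq_or_ne i j with rfl | hij
            · simp [hx2j]
            · have := DFunLike.congr_fun hmem i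
              simp only [Finsupp.add_apply] at this
              rw [Finsupp.erase_ne hij]
              rw [hx1, Finsupp.single_apply, if_neg (Ne.symm hij)] at this
              omega
          rw [Prod.mk.injEq]
          exact ⟨hx1, hx2⟩
        · rw [if_neg h2, mul_zero]
      · rw [if_neg h1, zero_mul]
    -- main term
    rw [coeff_binom_pow, ih]
    have h1 : (Finsupp.single j (d j)) = Finsupp.single j ((Finsupp.single j (d j)) j) := by simp
    rw [if_pos h1]
    have hcond : (∀ i, (d.erase j) i ≠ 0 → i ∈ s) ↔ (∀ i, d i ≠ 0 → i ∈ insert j s) := by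
      constructor
      · intro h i hi
        rcases eq_or_ne i j with rfl | hij
        · exact Finset.mem_insert_self _ _
        · exact Finset.mem_insert_of_mem (h i (by rwa [Finsupp.erase_ne hij]))
      · intro h i hi
        have hij : i ≠ j := by
          intro h'
          subst h'
          simp at hi
        have := h i (by rwa [Finsupp.erase_ne hij] at hi)
        rcases Finset.mem_insert.mp this with h' | h'
        · exact absurd h' hij
        · exact h'
    by_cases hc : ∀ i, d i ≠ 0 → i ∈ insert j s
    · rw [if_pos (hcond.mpr hc), if_pos hc, Finset.prod_insert hj]
      congr 1
      · simp
      · apply Finset.prod_congr rfl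
        intro i hi
        rw [Finsupp.erase_ne (by rintro rfl; exact hj hi)]
    · rw [if_neg (fun h => hc (hcond.mp h)), if_neg hc, mul_zero]

theorem coeff_shift (g : MvPolynomial (Fin n) R) (γ : Fin n → R) (d : Fin n →₀ ℕ) :
    coeff d (bind₁ (fun i => X i + C (γ i)) g) =
      ∑ u ∈ g.support, coeff u g * ∏ i, (((u i).choose (d i) : R) * γ i ^ (u i - d i)) := by
  conv_lhs => rw [g.as_sum, map_sum]
  rw [coeff_sum]
  apply Finset.sum_congr rfl
  intro u hu
  rw [bind₁_monomial]
  have hprod : (∏ i ∈ u.support, ((X i + C (γ i)) ^ u i : MvPolynomial (Fin n) R)) =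
      ∏ i : Fin n, ((X i + C (γ i)) ^ u i : MvPolynomial (Fin n) R) := by
    apply Finset.prod_subset (Finset.subset_univ _)
    intro i _ hi
    rw [Finsupp.notMem_support_iff.mp hi, pow_zero]
  rw [hprod, coeff_C_mul, coeff_prod_binom, if_pos (fun i _ => Finset.mem_univ i)]

theorem coeff_prod_top {ι : Type*} [DecidableEq ι] (s : Finset ι) (q : ι → Polynomial R) (e : ι → ℕ)
    (h : ∀ i ∈ s, (q i).natDegree ≤ e i) :
    (∏ i ∈ s, q i).coeff (∑ i ∈ s, e i) = ∏ i ∈ s, (q i).coeff (e i) := by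
  induction s using Finset.induction_on with
  | empty => simp
  | @insert j s hj ih =>
    rw [Finset.prod_insert hj, Finset.prod_insert hj, Finset.sum_insert hj,
      Polynomial.coeff_mul_add_eq_of_natDegree_le (h j (Finset.mem_insert_self j s))
        ((Polynomial.natDegree_prod_le s q).trans (Finset.sum_le_sum
          (fun i hi => h i (Finset.mem_insert_of_mem hi)))),
      ih (fun i hi => h i (Finset.mem_insert_of_mem hi))]

theorem coeff_line_pow_top (x v : R) (e : ℕ) :
    ((Polynomial.C x + Polynomial.C v * Polynomial.X) ^ e).coeff e = v ^ e := by
  have h1 : (Polynomial.C x + Polynomial.C v * Polynomial.X).natDegree ≤ 1 := by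
    apply (Polynomial.natDegree_add_le _ _).trans
    rw [max_le_iff]
    exact ⟨by simp, (Polynomial.natDegree_C_mul_le v Polynomial.X).trans Polynomial.natDegree_X_le⟩
  have := Polynomial.coeff_pow_of_natDegree_le (m := e) h1
  rw [mul_one] at this
  rw [this]
  congr 1
  simp

theorem natDegree_line_le (x v : R) : (Polynomial.C x + Polynomial.C v * Polynomial.X).natDegree ≤ 1 := by
  apply (Polynomial.natDegree_add_le _ _).trans
  rw [max_le_iff]
  exact ⟨by simp, (Polynomial.natDegree_C_mul_le v Polynomial.X).trans Polynomial.natDegree_X_le⟩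

theorem finsupp_deg_univ (v : Fin n →₀ ℕ) : (v.sum fun _ e => e) = ∑ i, v i :=
  Finsupp.sum_fintype _ _ (fun _ => rfl)

end Helpers

section LineCoeff

variable {F : Type*} [CommRing F] {n : ℕ}


/-- coefficient of the shift of `f` by a generic point `x + T b` of a line. -/
noncomputable def lineCoeff (f : MvPolynomial (Fin n) F) (b x : Fin n → F)
    (d : Fin n →₀ ℕ) : Polynomial F :=
  coeff d (bind₁
    (fun i => X i + C (Polynomial.C (x i) + Polynomial.C (b i) * Polynomial.X))
    (MvPolynomial.map (Polynomial.C : F →+* Polynomial F) f))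

theorem lineCoeff_decomp (f : MvPolynomial (Fin n) F) (b x : Fin n → F) (d : Fin n →₀ ℕ) :
    lineCoeff f b x d = coeff d (bind₁
      (fun i => X i + C (Polynomial.C (b i) * Polynomial.X))
      (MvPolynomial.map (Polynomial.C : F →+* Polynomial F) (polyShift f x))) := by
  unfold lineCoeff polyShift
  refine congrArg (coeff d) ?_
  have hcomp : ((bind₁ (fun i => X i +
          C (Polynomial.C (x i) + Polynomial.C (b i) * Polynomial.X))).toRingHom.comp
        (MvPolynomial.map (Polynomial.C : F →+* Polynomial F))) =
      ((bind₁ (fun i => (X i : MvPolynomial (Fin n) (Polynomial F)) +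
          C (Polynomial.C (b i) * Polynomial.X))).toRingHom.comp
        ((MvPolynomial.map (Polynomial.C : F →+* Polynomial F)).comp
          (bind₁ (fun i => (X i : MvPolynomial (Fin n) F) + C (x i))).toRingHom)) := by
    apply MvPolynomial.ringHom_ext
    · intro r'
      simp
    · intro i
      simp
      ring
  exact DFunLike.congr_fun hcomp f

theorem lineCoeff_taylor (f : MvPolynomial (Fin n) F) (b x : Fin n → F) (d : Fin n →₀ ℕ)
    (t : F) :
    Polynomial.taylor t (lineCoeff f b x d) = lineCoeff f b (x + t • b) d := by
  unfold lineCoeff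
  have hcomp : ((MvPolynomial.map
          ((Polynomial.aeval (Polynomial.X + Polynomial.C t)).toRingHom :
            Polynomial F →+* Polynomial F)).comp
        ((bind₁ (fun i => (X i : MvPolynomial (Fin n) (Polynomial F)) +
            C (Polynomial.C (x i) + Polynomial.C (b i) * Polynomial.X))).toRingHom.comp
          (MvPolynomial.map (Polynomial.C : F →+* Polynomial F)))) =
      ((bind₁ (fun i => (X i : MvPolynomial (Fin n) (Polynomial F)) +
          C (Polynomial.C ((x + t • b) i) + Polynomial.C (b i) * Polynomial.X))).toRingHom.comp
        (MvPolynomial.map (Polynomial.C : F →+* Polynomial F))) := by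
    apply MvPolynomial.ringHom_ext
    · intro r'
      simp
    · intro i
      simp [mul_add]
      ring
  have h1 := DFunLike.congr_fun hcomp f
  simp only [RingHom.comp_apply] at h1 ⊢
  have h2 := congrArg (coeff d) h1
  rw [MvPolynomial.coeff_map] at h2
  simp only [AlgHom.toRingHom_eq_coe, RingHom.coe_coe] at h2
  rw [← h2, Polynomial.taylor_apply, Polynomial.comp_eq_aeval]


theorem lineCoeff_lowvanish (f : MvPolynomial (Fin n) F) (b x : Fin n → F) (d : Fin n →₀ ℕ)
    {m : ℕ} (hv : ∀ u ∈ (polyShift f x).support, m ≤ ∑ i, u i)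
    (j : ℕ) (hj : (∑ i, d i) + j < m) :
    (lineCoeff f b x d).coeff j = 0 := by
  classical
  rw [lineCoeff_decomp, coeff_shift, Polynomial.finset_sum_coeff]
  apply Finset.sum_eq_zero
  intro u hu
  rw [MvPolynomial.support_map_of_injective _ Polynomial.C_injective] at hu
  have hum : m ≤ ∑ i, u i := hv u hu
  by_cases hdu : ∀ i, d i ≤ u i
  · have hE : ∑ i, d i ≤ ∑ i, u i := Finset.sum_le_sum fun i _ => hdu i
    have hEsum : ∑ i, (u i - d i) = (∑ i, u i) - ∑ i, d i :=
      Finset.sum_tsub_distrib Finset.univ (fun i _ => hdu i)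
    have hprod : (∏ i, (((u i).choose (d i) : Polynomial F)) *
          (Polynomial.C (b i) * Polynomial.X) ^ (u i - d i)) =
        Polynomial.C (∏ i, (((u i).choose (d i) : F) * (b i) ^ (u i - d i))) *
          Polynomial.X ^ (∑ i, (u i - d i)) := by
      rw [map_prod, ← Finset.prod_pow_eq_pow_sum, ← Finset.prod_mul_distrib]
      apply Finset.prod_congr rfl
      intro i _
      rw [mul_pow, map_mul, map_natCast, map_pow]
      ring
    rw [hprod, MvPolynomial.coeff_map, ← mul_assoc, ← Polynomial.C_mul,
      Polynomial.coeff_C_mul, Polynomial.coeff_X_pow, if_neg (by omega), mul_zero]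
  · push_neg at hdu
    obtain ⟨i0, hi0⟩ := hdu
    have hz : (((u i0).choose (d i0) : Polynomial F) *
        (Polynomial.C (b i0) * Polynomial.X) ^ (u i0 - d i0)) = 0 := by
      rw [Nat.choose_eq_zero_of_lt hi0, Nat.cast_zero, zero_mul]
    rw [Finset.prod_eq_zero (Finset.mem_univ i0) hz, mul_zero, Polynomial.coeff_zero]

theorem lineCoeff_natDegree_le (f : MvPolynomial (Fin n) F) (b x : Fin n → F)
    (d : Fin n →₀ ℕ) {D : ℕ} (hdeg : ∀ u ∈ f.support, ∑ i, u i = D) :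
    (lineCoeff f b x d).natDegree ≤ D - ∑ i, d i := by
  classical
  rw [lineCoeff, coeff_shift]
  apply Polynomial.natDegree_sum_le_of_forall_le
  intro u hu
  rw [MvPolynomial.support_map_of_injective _ Polynomial.C_injective] at hu
  by_cases hdu : ∀ i, d i ≤ u i
  · have hEsum : ∑ i, (u i - d i) = D - ∑ i, d i := by
      rw [Finset.sum_tsub_distrib Finset.univ (fun i _ => hdu i), hdeg u hu]
    apply Polynomial.natDegree_mul_le.trans
    rw [MvPolynomial.coeff_map, Polynomial.natDegree_C, zero_add]
    apply (Polynomial.natDegree_prod_le _ _).trans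
    rw [← hEsum]
    apply Finset.sum_le_sum
    intro i _
    apply Polynomial.natDegree_mul_le.trans
    rw [Polynomial.natDegree_natCast, zero_add]
    apply Polynomial.natDegree_pow_le.trans
    calc (u i - d i) * (Polynomial.C (x i) + Polynomial.C (b i) * Polynomial.X).natDegree
        ≤ (u i - d i) * 1 := Nat.mul_le_mul_left _ (natDegree_line_le _ _)
      _ = u i - d i := mul_one _
  · push_neg at hdu
    obtain ⟨i0, hi0⟩ := hdu
    have hz : (((u i0).choose (d i0) : Polynomial F) *
        (Polynomial.C (x i0) + Polynomial.C (b i0) * Polynomial.X) ^ (u i0 - d i0)) = 0 := by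
      rw [Nat.choose_eq_zero_of_lt hi0, Nat.cast_zero, zero_mul]
    rw [Finset.prod_eq_zero (Finset.mem_univ i0) hz, mul_zero, Polynomial.natDegree_zero]
    exact Nat.zero_le _

theorem lineCoeff_top (f : MvPolynomial (Fin n) F) (b x : Fin n → F)
    (d : Fin n →₀ ℕ) {D : ℕ} (hdeg : ∀ u ∈ f.support, ∑ i, u i = D) :
    (lineCoeff f b x d).coeff (D - ∑ i, d i) = coeff d (polyShift f b) := by
  classical
  rw [lineCoeff, coeff_shift, polyShift, coeff_shift, Polynomial.finset_sum_coeff]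
  rw [MvPolynomial.support_map_of_injective _ Polynomial.C_injective]
  apply Finset.sum_congr rfl
  intro u hu
  rw [MvPolynomial.coeff_map, Polynomial.coeff_C_mul]
  congr 1
  by_cases hdu : ∀ i, d i ≤ u i
  · have hEsum : ∑ i, (u i - d i) = D - ∑ i, d i := by
      rw [Finset.sum_tsub_distrib Finset.univ (fun i _ => hdu i), hdeg u hu]
    rw [Finset.prod_mul_distrib, Finset.prod_mul_distrib]
    rw [← Nat.cast_prod, ← Nat.cast_prod, ← Polynomial.C_eq_natCast, Polynomial.coeff_C_mul]
    congr 1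
    rw [← hEsum, coeff_prod_top _ _ (fun i => u i - d i)
        (fun i _ => Polynomial.natDegree_pow_le.trans (by
          calc (u i - d i) * (Polynomial.C (x i) + Polynomial.C (b i) * Polynomial.X).natDegree
              ≤ (u i - d i) * 1 := Nat.mul_le_mul_left _ (natDegree_line_le _ _)
            _ = u i - d i := mul_one _))]
    apply Finset.prod_congr rfl
    intro i _
    exact coeff_line_pow_top _ _ _
  · push_neg at hdu
    obtain ⟨i0, hi0⟩ := hdu
    have hz1 : (((u i0).choose (d i0) : Polynomial F) *
        (Polynomial.C (x i0) + Polynomial.C (b i0) * Polynomial.X) ^ (u i0 - d i0)) = 0 := by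
      rw [Nat.choose_eq_zero_of_lt hi0, Nat.cast_zero, zero_mul]
    have hz2 : (((u i0).choose (d i0) : F) * (b i0) ^ (u i0 - d i0)) = 0 := by
      rw [Nat.choose_eq_zero_of_lt hi0, Nat.cast_zero, zero_mul]
    rw [Finset.prod_eq_zero (Finset.mem_univ i0) hz1,
      Finset.prod_eq_zero (Finset.mem_univ i0) hz2, Polynomial.coeff_zero]

end LineCoeff

theorem hasse_vanish_on_line_implies_at_direction
    {p : ℕ} [Fact p.Prime] {k m n : ℕ} (hk : 0 < k) (hpk : p ∣ k) (hn : 0 < n)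
    (hm : m = 2 * k - k / p)
    (f : MvPolynomial (Fin n) (ZMod p)) (hf : f.IsHomogeneous (k * p - 1))
    (a b : Fin n → ZMod p) (hb : b ≠ 0)
    (hline : ∀ t : ZMod p, HasseVanish f (a + t • b) m) :
    HasseVanish f b k := by
  classical
  have hp : p.Prime := Fact.out
  intro d hd
  rw [finsupp_deg_univ] at hd
  set w := ∑ i : Fin n, d i with hw
  set D := k * p - 1 with hD
  -- arithmetic facts
  have hp2 : 2 ≤ p := hp.two_le
  obtain ⟨qk, hqk⟩ := hpk
  have hkp : k / p = qk := by rw [hqk, Nat.mul_div_cancel_left _ (by omega)]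
  rw [hkp] at hm
  have hqk_le : qk ≤ k := by
    rw [hqk]; exact Nat.le_mul_of_pos_left _ (by omega)
  have hmk : k ≤ m := by omega
  set r := m - w with hr
  have hr1 : 1 ≤ r := by omega
  have hDr : D - w < p * r := by
    have t1 : (p - 1) * w ≤ (p - 1) * k := Nat.mul_le_mul_left _ (le_of_lt hd)
    have t2 : (p - 1) * w = p * w - 1 * w := Nat.sub_mul p 1 w
    have t3 : (p - 1) * k = p * k - 1 * k := Nat.sub_mul p 1 k
    have t4 : w ≤ p * w := Nat.le_mul_of_pos_left _ (by omega)
    have t5 : k ≤ p * k := Nat.le_mul_of_pos_left _ (by omega)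
    have key : p * w + k ≤ p * k + w := by omega
    have E1 : p * m = p * w + p * r := by
      rw [show m = w + r by omega, Nat.mul_add]
    have E2 : p * m + p * qk = 2 * (p * k) := by
      rw [← Nat.mul_add, show m + qk = 2 * k by omega]; ring
    have hpq : p * qk = k := hqk.symm
    have hc : k * p = p * k := Nat.mul_comm k p
    omega
  -- homogeneity: every monomial of f has total degree D
  have hfdeg : ∀ u ∈ f.support, ∑ i, u i = D := by
    intro u hu
    have h1 := hf (MvPolynomial.mem_support_iff.mp hu)
    have h2 : u.degree = D := by
      rw [Finsupp.degree_eq_weight_one]; exact h1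
    rw [← h2, Finsupp.degree]
    exact (Finset.sum_subset (Finset.subset_univ _)
      (fun i _ hi => Finsupp.notMem_support_iff.mp hi)).symm
  -- Step A+B : multiplicity at each t for `lineCoeff f b a d`
  have stepA : ∀ t : ZMod p, (Polynomial.X - Polynomial.C t) ^ r ∣ lineCoeff f b a d := by
    intro t
    have hXr : Polynomial.X ^ r ∣ lineCoeff f b (a + t • b) d := by
      rw [Polynomial.X_pow_dvd_iff]
      intro j hj
      apply lineCoeff_lowvanish f b (a + t • b) d (m := m) ?hv j (by omega)
      intro u hu
      by_contra hlt
      push_neg at hlt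
      exact (MvPolynomial.mem_support_iff.mp hu)
        (hline t u (by rw [finsupp_deg_univ]; exact hlt))
    obtain ⟨g, hg⟩ := hXr
    rw [← lineCoeff_taylor f b a d t] at hg
    have hback : lineCoeff f b a d = Polynomial.taylor (-t) (Polynomial.X ^ r * g) := by
      rw [← hg, Polynomial.taylor_taylor, neg_add_cancel, Polynomial.taylor_zero]
    rw [hback, Polynomial.taylor_apply, Polynomial.mul_comp, Polynomial.pow_comp,
      Polynomial.X_comp, Polynomial.C_neg, ← sub_eq_add_neg]
    exact Dvd.intro _ rfl
  -- Step C : lineCoeff f b a d = 0 by degree comparison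
  have hzero : lineCoeff f b a d = 0 := by
    by_contra hne
    have hdvd : (∏ t : ZMod p, (Polynomial.X - Polynomial.C t) ^ r) ∣ lineCoeff f b a d := by
      apply Fintype.prod_dvd_of_coprime ?hc stepA
      intro s t hst
      exact (Polynomial.pairwise_coprime_X_sub_C Function.injective_id hst).pow
    have hdp : (∏ t : ZMod p, (Polynomial.X - Polynomial.C t) ^ r).natDegree = p * r := by
      rw [Polynomial.natDegree_prod _ _ (fun t _ => pow_ne_zero _ (Polynomial.X_sub_C_ne_zero t))]
      simp [Polynomial.natDegree_pow, Polynomial.natDegree_X_sub_C, Finset.sum_const,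
        Finset.card_univ, ZMod.card, mul_comm]
    have hle := Polynomial.natDegree_le_of_dvd hdvd hne
    have hub := lineCoeff_natDegree_le f b a d hfdeg
    rw [hdp] at hle
    rw [← hw] at hub
    omega
  -- Step D : conclude via the top coefficient
  have htop := lineCoeff_top f b a d hfdeg
  rw [← hw] at htop
  rw [← htop, hzero, Polynomial.coeff_zero]
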